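/- There exists a separable metric space V such that every bounded separable metric space admits a distance-preserving map into V, but there is no distance-preserving map from ℝ (with its usual metric) into V. -/

import Mathlib

universe u

namespace Stmt6x
inductive C : Type where
  | base : C
  | ext (l : List (C × ℚ)) : C
open C
lemma sizeOf_mem {l : List (C × ℚ)} {y : C} {q : ℚ} (h : (y, q) ∈ l) :
    sizeOf y < sizeOf (C.ext l) := by
  induction l with
  | nil => simp at h
  | cons a t ih =>
    rcases List.mem_cons.1 h with h' | h'
    · subst h'; simp; omega
    · have := ih h'; simp at this ⊢; omega
open scoped Classical
mutual
  noncomputable def δ : C → C → ℚ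
    | base, base => 0
    | base, ext l => e l base
    | ext l, base => e l base
    | ext l, ext l' => if l = l' then 0 else min (e l (ext l')) (e l' (ext l))
    termination_by x y => sizeOf x + sizeOf y
    decreasing_by all_goals (simp; try omega)
  noncomputable def e : List (C × ℚ) → C → ℚ
    | [], _ => 1
    | (y, q) :: t, w => min (q + δ y w) (e t w)
    termination_by l w => sizeOf l + sizeOf w
    decreasing_by all_goals (simp; try omega)
end

inductive ok : C → Prop where
  | base : ok base
  | ext {l : List (C × ℚ)} :
      (∀ p ∈ l, ok p.1) → (∀ p ∈ l, 0 < p.2 ∧ p.2 ≤ 1) →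
      (∀ p ∈ l, ∀ r ∈ l, |p.2 - r.2| ≤ δ p.1 r.1 ∧ δ p.1 r.1 ≤ p.2 + r.2) →
      ok (ext l)

@[simp] lemma e_nil (w : C) : e [] w = 1 := by rw [e]
@[simp] lemma e_cons (y : C) (q : ℚ) (t : List (C × ℚ)) (w : C) :
    e ((y, q) :: t) w = min (q + δ y w) (e t w) := by rw [e]
@[simp] lemma δ_bb : δ base base = 0 := by rw [δ]
lemma δ_be (l) : δ base (ext l) = e l base := by rw [δ]
lemma δ_eb (l) : δ (ext l) base = e l base := by rw [δ]
lemma δ_ee (l l') : δ (ext l) (ext l') =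
    if l = l' then 0 else min (e l (ext l')) (e l' (ext l)) := by rw [δ]

@[simp] lemma δ_self (x : C) : δ x x = 0 := by
  cases x with
  | base => simp
  | ext l => rw [δ_ee]; simp

lemma ok_points {l : List (C × ℚ)} (h : ok (ext l)) : ∀ p ∈ l, ok p.1 := by
  cases h with | ext h1 h2 h3 => exact h1
lemma ok_bounds {l : List (C × ℚ)} (h : ok (ext l)) : ∀ p ∈ l, 0 < p.2 ∧ p.2 ≤ 1 := by
  cases h with | ext h1 h2 h3 => exact h2
lemma ok_kat {l : List (C × ℚ)} (h : ok (ext l)) :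
    ∀ p ∈ l, ∀ r ∈ l, |p.2 - r.2| ≤ δ p.1 r.1 ∧ δ p.1 r.1 ≤ p.2 + r.2 := by
  cases h with | ext h1 h2 h3 => exact h3

lemma δ_comm (x y : C) : δ x y = δ y x := by
  cases x <;> cases y <;> simp only [δ_be, δ_eb, δ_ee]
  case ext.ext l l' =>
    rcases eq_or_ne l l' with h | h
    · simp [h]
    · simp [h, h.symm, Ne.symm h, min_comm]

lemma e_le_one (l : List (C × ℚ)) (w : C) : e l w ≤ 1 := by
  induction l with
  | nil => simp
  | cons p t ih => rcases p with ⟨y, q⟩; simpa using Or.inr ih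

lemma e_le_mem {l : List (C × ℚ)} {y : C} {q : ℚ} (h : (y, q) ∈ l) (w : C) :
    e l w ≤ q + δ y w := by
  induction l with
  | nil => simp at h
  | cons p t ih =>
    rcases p with ⟨y', q'⟩
    rcases List.mem_cons.1 h with h' | h'
    · rw [Prod.mk.injEq] at h'
      simp [h'.1, h'.2]
    · simpa using Or.inr (ih h')

lemma le_e {l : List (C × ℚ)} {w : C} {a : ℚ} (h1 : a ≤ 1)
    (h : ∀ p ∈ l, a ≤ p.2 + δ p.1 w) : a ≤ e l w := by
  induction l with
  | nil => simpa
  | cons p t ih =>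
    rcases p with ⟨y, q⟩
    simp only [e_cons, le_min_iff]
    exact ⟨h (y, q) (by simp), ih fun r hr => h r (List.mem_cons_of_mem _ hr)⟩

lemma e_cases (l : List (C × ℚ)) (w : C) :
    e l w = 1 ∨ ∃ p ∈ l, e l w = p.2 + δ p.1 w := by
  induction l with
  | nil => simp
  | cons p t ih =>
    rcases p with ⟨y, q⟩
    rcases min_cases (q + δ y w) (e t w) with ⟨h, _⟩ | ⟨h, _⟩
    · exact Or.inr ⟨(y, q), by simp, by simpa using h⟩
    · rcases ih with h' | ⟨r, hr, h'⟩
      · left; rw [e_cons, h, h']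
      · exact Or.inr ⟨r, List.mem_cons_of_mem _ hr, by simpa using h.trans h'⟩

lemma δ_nonneg : ∀ x y : C, ok x → ok y → 0 ≤ δ x y := by
  have key : ∀ n x y, sizeOf x + sizeOf y ≤ n → ok x → ok y → 0 ≤ δ x y := by
    intro n
    induction n with
    | zero => intro x y h; cases x <;> simp at h
    | succ n ih =>
      intro x y hn hx hy
      have he : ∀ (l : List (C × ℚ)) (w : C), ok (ext l) → ok w →
          sizeOf l + sizeOf w ≤ n → 0 ≤ e l w := by
        intro l w hl hw hsz
        have h1 := ok_points hl
        have h2 := ok_bounds hl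
        apply le_e (by norm_num)
        intro p hp
        have hps := sizeOf_mem (y := p.1) (q := p.2) (by simpa using hp)
        have := ih p.1 w (by simp at hps ⊢; omega) (h1 p hp) hw
        have := (h2 p hp).1
        linarith
      cases x with
      | base => cases y with
        | base => simp
        | ext l =>
          rw [δ_be]
          exact he l base hy .base (by simp at hn ⊢; omega)
      | ext l => cases y with
        | base =>
          rw [δ_eb]
          exact he l base hx .base (by simp at hn ⊢; omega)
        | ext l' =>
          rw [δ_ee]
          split
          · rfl
          · simp only [le_min_iff]
            constructor
            · exact he l (ext l') hx hy (by simp at hn ⊢; omega)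
            · exact he l' (ext l) hy hx (by simp at hn ⊢; omega)
  exact fun x y => key (sizeOf x + sizeOf y) x y le_rfl

lemma e_nonneg {l : List (C × ℚ)} {w : C} (hl : ok (ext l)) (hw : ok w) :
    0 ≤ e l w := by
  apply le_e (by norm_num)
  intro p hp
  have := δ_nonneg p.1 w (ok_points hl p hp) hw
  have := (ok_bounds hl p hp).1
  linarith

lemma δ_le_one : ∀ x y : C, δ x y ≤ 1 := by
  intro x y
  cases x <;> cases y <;> simp [δ_be, δ_eb, δ_ee, e_le_one]
  case ext.ext l l' =>
    split
    · norm_num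
    · simp only [min_le_iff]; exact Or.inl (e_le_one _ _)

/-! ### The main simultaneous induction -/


/-! ### Measure helpers -/

lemma pow4_pos (a : ℕ) : 1 ≤ 4 ^ a := Nat.one_le_pow a 4 (by norm_num)

lemma pow4_mono {a b : ℕ} (h : a ≤ b) : 4 ^ a ≤ 4 ^ b :=
  Nat.pow_le_pow_right (by norm_num) h

lemma pow4_two {a c b : ℕ} (h1 : a < b) (h2 : c < b) : 4 ^ a + 4 ^ c < 4 ^ b := by
  have e1 : 4 ^ a ≤ 4 ^ (b - 1) := pow4_mono (by omega)
  have e2 : 4 ^ c ≤ 4 ^ (b - 1) := pow4_mono (by omega)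
  have e3 : 4 ^ (b - 1) * 4 = 4 ^ b := by
    rw [← pow_succ]; congr 1; omega
  nlinarith [pow4_pos (b - 1)]

lemma sizeOf_ext_pos (l : List (C × ℚ)) : 0 < sizeOf (ext l) := by
  simp

lemma one_lt_sizeOf_ext (l : List (C × ℚ)) : 1 < sizeOf (ext l) := by
  cases l <;> simp

@[simp] lemma sizeOf_base : sizeOf (base : C) = 1 := by simp

/-! ### The main simultaneous induction -/

def EStmt (N : ℕ) : Prop :=
  ∀ (l : List (C × ℚ)) (z : C), ok (ext l) → ok z → sizeOf z ≤ sizeOf (ext l) →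
    z ≠ ext l → 4 ^ sizeOf (ext l) + 4 ^ sizeOf z ≤ N → δ (ext l) z = e l z

def RStmt (N : ℕ) : Prop :=
  ∀ (l : List (C × ℚ)) (y : C) (q : ℚ), ok (ext l) → (y, q) ∈ l →
    4 ^ sizeOf (ext l) + 4 ^ sizeOf y + 1 ≤ N → δ (ext l) y = q

def TStmt (N : ℕ) : Prop :=
  ∀ x y z : C, ok x → ok y → ok z →
    4 ^ sizeOf x + 4 ^ sizeOf y + 4 ^ sizeOf z ≤ N → δ x z ≤ δ x y + δ y z

theorem master : ∀ N : ℕ, EStmt N ∧ RStmt N ∧ TStmt N := by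
  intro N
  induction N using Nat.strong_induction_on with
  | _ N IH =>
  have hE : EStmt N := by
    intro l z hl hz hsz hne hμ
    cases z with
    | base => rw [δ_eb]
    | ext l' =>
      have hll' : l ≠ l' := fun h => hne (by rw [h])
      rw [δ_ee, if_neg hll']
      refine min_eq_left ?_
      refine le_e (e_le_one _ _) ?_
      rintro ⟨w, p⟩ hw
      simp only
      have hokw : ok w := ok_points hz _ hw
      have hszw : sizeOf w < sizeOf (ext l') := sizeOf_mem hw
      have hszwx : sizeOf w < sizeOf (ext l) := lt_of_lt_of_le hszw hsz
      have hp := (ok_bounds hz _ hw).1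
      -- δ (ext l') w = p  via R at smaller measure
      have harith1 : 4 ^ sizeOf w + 1 < 4 ^ sizeOf (ext l) := by
        have := pow4_two hszwx (sizeOf_ext_pos l)
        have := pow4_pos (sizeOf w)
        simp only [pow_zero] at *
        omega
      have hwp : δ (ext l') w = p := by
        refine (IH (4 ^ sizeOf (ext l') + 4 ^ sizeOf w + 1) ?_).2.1 l' w p hz hw le_rfl
        have := pow4_mono hsz
        omega
      -- δ (ext l) w = e l w  via E at smaller measure
      have hEw : δ (ext l) w = e l w := by
        refine (IH (4 ^ sizeOf (ext l) + 4 ^ sizeOf w) ?_).1 l w hl hokw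
          (le_of_lt hszwx) (by intro h; rw [h] at hszwx; exact absurd hszwx (lt_irrefl _)) le_rfl
        have hst : 4 ^ sizeOf w + 1 < 4 ^ sizeOf (ext l') := by
          have := pow4_two hszw (sizeOf_ext_pos l')
          simpa using this
        linarith
      rw [δ_comm w (ext l), hEw]
      rcases e_cases l w with hc | ⟨⟨y, q⟩, hyq, hc⟩
      · have := e_le_one l (ext l')
        rw [hc]; linarith
      · simp only at hc
        have hoky : ok y := ok_points hl _ hyq
        have hszy : sizeOf y < sizeOf (ext l) := sizeOf_mem hyq
        have h1 : e l (ext l') ≤ q + δ y (ext l') := e_le_mem hyq _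
        have h2 : δ y (ext l') ≤ δ y w + δ w (ext l') := by
          refine (IH (4 ^ sizeOf y + 4 ^ sizeOf w + 4 ^ sizeOf (ext l')) ?_).2.2
            y w (ext l') hoky hokw hz le_rfl
          have := pow4_two hszy hszwx
          omega
        have h3 : δ w (ext l') = p := by rw [δ_comm, hwp]
        rw [hc]
        linarith
  have hR : RStmt N := by
    intro l y q hl hmem hμ
    have hoky : ok y := ok_points hl _ hmem
    have hszy : sizeOf y < sizeOf (ext l) := sizeOf_mem hmem
    have hEy : δ (ext l) y = e l y :=
      hE l y hl hoky (le_of_lt hszy)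
        (by intro h; rw [h] at hszy; exact absurd hszy (lt_irrefl _)) (by omega)
    rw [hEy]
    refine le_antisymm ?_ ?_
    · have := e_le_mem hmem y
      simpa using this
    · refine le_e (ok_bounds hl _ hmem).2 ?_
      rintro ⟨y', q'⟩ hy'
      simp only
      have hk := (ok_kat hl _ hmem _ hy').1
      simp only at hk
      have : q - q' ≤ δ y y' := le_trans (le_abs_self _) hk
      rw [δ_comm]
      linarith
  refine ⟨hE, hR, ?_⟩
  intro x y z hx hy hz hμ
  -- trivial equality cases
  rcases eq_or_ne x z with rfl | hxz
  · simp only [δ_self]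
    have := δ_nonneg x y hx hy
    have := δ_nonneg y x hy hx
    rw [δ_comm x y]; linarith
  rcases eq_or_ne x y with rfl | hxy
  · simp [δ_self]
  rcases eq_or_ne y z with rfl | hyz
  · simp [δ_self]
  -- helper: the case where the first argument has maximal size
  have hA : ∀ x y z : C, ok x → ok y → ok z →
      4 ^ sizeOf x + 4 ^ sizeOf y + 4 ^ sizeOf z ≤ N →
      x ≠ y → x ≠ z → sizeOf y ≤ sizeOf x → sizeOf z ≤ sizeOf x →
      δ x z ≤ δ x y + δ y z := by
    clear hx hy hz hμ hxz hxy hyz x y z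
    intro x y z hx hy hz hμ hxy hxz hszy hszz
    cases x with
    | base =>
      exfalso
      cases y with
      | base => exact hxy rfl
      | ext m =>
        have h1 := one_lt_sizeOf_ext m
        rw [sizeOf_base] at hszy; omega
    | ext l =>
      have hEz : δ (ext l) z = e l z := by
        refine (IH (4 ^ sizeOf (ext l) + 4 ^ sizeOf z) ?_).1 l z hx hz hszz
          (Ne.symm hxz) le_rfl
        have := pow4_pos (sizeOf y); omega
      have hEy : δ (ext l) y = e l y := by
        refine (IH (4 ^ sizeOf (ext l) + 4 ^ sizeOf y) ?_).1 l y hx hy hszy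
          (Ne.symm hxy) le_rfl
        have := pow4_pos (sizeOf z); omega
      rw [hEz, hEy]
      rcases e_cases l y with hc | ⟨⟨w, q⟩, hwq, hc⟩
      · have h1 := e_le_one l z
        have h2 := δ_nonneg y z hy hz
        rw [hc]; linarith
      · simp only at hc
        have hokw : ok w := ok_points hx _ hwq
        have hszw : sizeOf w < sizeOf (ext l) := sizeOf_mem hwq
        have h1 : e l z ≤ q + δ w z := e_le_mem hwq _
        have h2 : δ w z ≤ δ w y + δ y z := by
          refine (IH (4 ^ sizeOf w + 4 ^ sizeOf y + 4 ^ sizeOf z) ?_).2.2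
            w y z hokw hy hz le_rfl
          have h3 : 4 ^ sizeOf w < 4 ^ sizeOf (ext l) := by
            have := pow4_two hszw (sizeOf_ext_pos l)
            have := pow4_pos 0
            simp only [pow_zero] at this ⊢
            omega
          omega
        rw [hc]
        linarith
  -- helper: the case where the middle argument has maximal size
  have hC : sizeOf x ≤ sizeOf y → sizeOf z ≤ sizeOf y → δ x z ≤ δ x y + δ y z := by
    intro hszx hszz
    cases y with
    | base =>
      exfalso
      cases x with
      | base => exact hxy rfl
      | ext m =>
        have h1 := one_lt_sizeOf_ext m
        rw [sizeOf_base] at hszx; omega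
    | ext m =>
      have hEx : δ x (ext m) = e m x := by
        rw [δ_comm]
        refine (IH (4 ^ sizeOf (ext m) + 4 ^ sizeOf x) ?_).1 m x hy hx hszx hxy le_rfl
        have := pow4_pos (sizeOf z); omega
      have hEz : δ (ext m) z = e m z := by
        refine (IH (4 ^ sizeOf (ext m) + 4 ^ sizeOf z) ?_).1 m z hy hz hszz
          (Ne.symm hyz) le_rfl
        have := pow4_pos (sizeOf x); omega
      rw [hEx, hEz]
      rcases e_cases m x with hc | ⟨⟨w, p⟩, hwp, hc⟩
      · have h1 := δ_le_one x z
        have h2 := e_nonneg hy hz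
        rw [hc]; linarith
      rcases e_cases m z with hc' | ⟨⟨w', p'⟩, hwp', hc'⟩
      · have h1 := δ_le_one x z
        have h2 := e_nonneg hy hx
        rw [hc']; linarith
      simp only at hc hc'
      have hokw : ok w := ok_points hy _ hwp
      have hokw' : ok w' := ok_points hy _ hwp'
      have hszw : sizeOf w < sizeOf (ext m) := sizeOf_mem hwp
      have hszw' : sizeOf w' < sizeOf (ext m) := sizeOf_mem hwp'
      have h1 : δ x z ≤ δ x w + δ w z := by
        refine (IH (4 ^ sizeOf x + 4 ^ sizeOf w + 4 ^ sizeOf z) ?_).2.2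
          x w z hx hokw hz le_rfl
        have := pow4_two hszw (sizeOf_ext_pos m)
        have := pow4_pos (sizeOf w)
        have := pow4_mono (le_of_lt hszw)
        omega
      have h2 : δ w z ≤ δ w w' + δ w' z := by
        refine (IH (4 ^ sizeOf w + 4 ^ sizeOf w' + 4 ^ sizeOf z) ?_).2.2
          w w' z hokw hokw' hz le_rfl
        have h4 := pow4_two hszw hszw'
        have h5 := pow4_pos (sizeOf x)
        linarith
      have h3 : δ w w' ≤ p + p' := (ok_kat hy _ hwp _ hwp').2
      have h4 : δ x w = δ w x := δ_comm _ _
      rw [hc, hc']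
      linarith
  rcases le_total (sizeOf x) (sizeOf y) with h1 | h1
  · rcases le_total (sizeOf z) (sizeOf y) with h2 | h2
    · exact hC h1 h2
    · -- z maximal: flip
      rw [δ_comm x z, δ_comm x y, δ_comm y z]
      have := hA z y x hz hy hx (by omega) (Ne.symm hyz) (Ne.symm hxz) h2 (h1.trans h2)
      linarith
  · rcases le_total (sizeOf z) (sizeOf x) with h2 | h2
    · exact hA x y z hx hy hz hμ hxy hxz h1 h2
    · rw [δ_comm x z, δ_comm x y, δ_comm y z]
      have := hA z y x hz hy hx (by omega) (Ne.symm hyz) (Ne.symm hxz) (h1.trans h2) h2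
      linarith

theorem δ_triangle (x y z : C) (hx : ok x) (hy : ok y) (hz : ok z) :
    δ x z ≤ δ x y + δ y z :=
  (master (4 ^ sizeOf x + 4 ^ sizeOf y + 4 ^ sizeOf z)).2.2 x y z hx hy hz le_rfl

theorem δ_realize {l : List (C × ℚ)} {y : C} {q : ℚ} (hl : ok (ext l))
    (hmem : (y, q) ∈ l) : δ (ext l) y = q :=
  (master (4 ^ sizeOf (ext l) + 4 ^ sizeOf y + 1)).2.1 l y q hl hmem le_rfl

theorem δ_pos {x y : C} (hx : ok x) (hy : ok y) (hne : x ≠ y) : 0 < δ x y := by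
  cases x with
  | base =>
    cases y with
    | base => exact absurd rfl hne
    | ext l =>
      rw [δ_be]
      rcases e_cases l base with hc | ⟨⟨w, p⟩, hwp, hc⟩
      · rw [hc]; norm_num
      · simp only at hc
        rw [hc]
        have := δ_nonneg w base (ok_points hy _ hwp) .base
        have := (ok_bounds hy _ hwp).1
        linarith
  | ext l =>
    cases y with
    | base =>
      rw [δ_eb]
      rcases e_cases l base with hc | ⟨⟨w, p⟩, hwp, hc⟩
      · rw [hc]; norm_num
      · simp only at hc
        rw [hc]
        have := δ_nonneg w base (ok_points hx _ hwp) .base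
        have := (ok_bounds hx _ hwp).1
        linarith
    | ext l' =>
      have hll : l ≠ l' := fun h => hne (by rw [h])
      rw [δ_ee, if_neg hll]
      have key : ∀ (m : List (C × ℚ)) (w : C), ok (ext m) → ok w → 0 < e m w := by
        intro m w hm hw
        rcases e_cases m w with hc | ⟨⟨u, p⟩, hup, hc⟩
        · rw [hc]; norm_num
        · simp only at hc
          rw [hc]
          have := δ_nonneg u w (ok_points hm _ hup) hw
          have := (ok_bounds hm _ hup).1
          linarith
      simp only [lt_min_iff]
      exact ⟨key l (ext l') hx hy, key l' (ext l) hy hx⟩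

/-! ### Countability -/

mutual
  noncomputable def enc : C → ℕ
    | base => 0
    | ext l => Nat.succ (encL l)
    termination_by c => sizeOf c
    decreasing_by simp; try omega
  noncomputable def encL : List (C × ℚ) → ℕ
    | [] => 0
    | (y, q) :: t => Nat.succ (Nat.pair (Nat.pair (enc y) (Encodable.encode q)) (encL t))
    termination_by l => sizeOf l
    decreasing_by all_goals (simp; try omega)
end

lemma enc_inj : ∀ x y : C, enc x = enc y → x = y := by
  have key : ∀ n, (∀ x y : C, sizeOf x + sizeOf y ≤ n → enc x = enc y → x = y) ∧
      (∀ l l' : List (C × ℚ), sizeOf l + sizeOf l' ≤ n → encL l = encL l' → l = l') := by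
    intro n
    induction n using Nat.strong_induction_on with
    | _ n ih =>
    constructor
    · intro x y hn h
      cases x with
      | base => cases y with
        | base => rfl
        | ext l => simp only [enc] at h; omega
      | ext l => cases y with
        | base => simp only [enc] at h; omega
        | ext l' =>
          simp only [enc] at h
          have hsz : sizeOf l + sizeOf l' < n := by simp at hn; omega
          have := (ih (sizeOf l + sizeOf l') hsz).2 l l' le_rfl (Nat.succ_injective h)
          rw [this]
    · intro l l' hn h
      cases l with
      | nil => cases l' with
        | nil => rfl
        | cons b t =>
          rcases b with ⟨y, q⟩
          simp only [encL] at h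
          omega
      | cons a t => cases l' with
        | nil =>
          rcases a with ⟨y, q⟩
          simp only [encL] at h
          omega
        | cons b t' =>
          rcases a with ⟨y, q⟩
          rcases b with ⟨y', q'⟩
          simp only [encL] at h
          have h2 : Nat.pair (Nat.pair (enc y) (Encodable.encode q)) (encL t) =
              Nat.pair (Nat.pair (enc y') (Encodable.encode q')) (encL t') :=
            Nat.succ_injective (by simpa [encL] using h)
          have h3 := Nat.pair_eq_pair.1 h2
          have h4 := Nat.pair_eq_pair.1 h3.1
          have hy : y = y' := by
            have hsz : sizeOf y + sizeOf y' < n := by simp at hn; omega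
            exact (ih _ hsz).1 y y' le_rfl h4.1
          have hq : q = q' := Encodable.encode_injective h4.2
          have ht : t = t' := by
            have hsz : sizeOf t + sizeOf t' < n := by simp at hn; omega
            exact (ih _ hsz).2 t t' le_rfl h3.2
          rw [hy, hq, ht]
  exact fun x y => (key (sizeOf x + sizeOf y)).1 x y le_rfl

instance : Countable C := ⟨⟨enc, enc_inj⟩⟩

/-! ### The countable metric space X -/

def Xok : Type := { c : C // ok c }

instance : Countable Xok := Subtype.countable

noncomputable instance : MetricSpace Xok where
  dist x y := ((δ x.1 y.1 : ℚ) : ℝ)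
  dist_self x := by
    change ((δ x.1 x.1 : ℚ) : ℝ) = 0
    simp
  dist_comm x y := by
    change ((δ x.1 y.1 : ℚ) : ℝ) = ((δ y.1 x.1 : ℚ) : ℝ)
    rw [δ_comm]
  dist_triangle x y z := by
    change ((δ x.1 z.1 : ℚ) : ℝ) ≤ ((δ x.1 y.1 : ℚ) : ℝ) + ((δ y.1 z.1 : ℚ) : ℝ)
    have := δ_triangle x.1 y.1 z.1 x.2 y.2 z.2
    rw [← Rat.cast_add]
    exact_mod_cast this
  eq_of_dist_eq_zero := by
    intro x y h
    by_contra hne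
    have hne' : x.1 ≠ y.1 := fun hh => hne (Subtype.ext hh)
    have h1 := δ_pos x.2 y.2 hne'
    have h2 : ((δ x.1 y.1 : ℚ) : ℝ) = 0 := h
    have h3 : (δ x.1 y.1 : ℚ) = 0 := by exact_mod_cast h2
    rw [h3] at h1
    exact lt_irrefl _ h1

lemma Xok_dist (x y : Xok) : dist x y = ((δ x.1 y.1 : ℚ) : ℝ) := rfl

lemma Xok_dist_le_one (x y : Xok) : dist x y ≤ 1 := by
  rw [Xok_dist]
  exact_mod_cast δ_le_one x.1 y.1

lemma Xok_dist_nonneg' (x y : Xok) : (0:ℝ) ≤ dist x y := dist_nonneg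

/-- Exact realization of rational Katětov functions over finite families in X. -/
theorem Xok_realize (n : ℕ) (a : Fin n → Xok) (q : Fin n → ℚ)
    (hpos : ∀ i, 0 < q i) (hle : ∀ i, q i ≤ 1)
    (hkat1 : ∀ i j, |(q i : ℝ) - q j| ≤ dist (a i) (a j))
    (hkat2 : ∀ i j, dist (a i) (a j) ≤ (q i : ℝ) + q j) :
    ∃ z : Xok, ∀ i, dist z (a i) = (q i : ℝ) := by
  set l : List (C × ℚ) := List.ofFn (fun i => ((a i).1, q i)) with hl
  have hmem : ∀ p ∈ l, ∃ i, p = ((a i).1, q i) := by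
    intro p hp
    rw [hl, List.mem_ofFn] at hp
    rcases hp with ⟨i, hi⟩
    exact ⟨i, hi.symm⟩
  have hok : ok (ext l) := by
    refine ok.ext ?_ ?_ ?_
    · intro p hp; rcases hmem p hp with ⟨i, rfl⟩; exact (a i).2
    · intro p hp; rcases hmem p hp with ⟨i, rfl⟩; exact ⟨hpos i, hle i⟩
    · intro p hp r hr
      rcases hmem p hp with ⟨i, rfl⟩
      rcases hmem r hr with ⟨j, rfl⟩
      have k1 := hkat1 i j
      have k2 := hkat2 i j
      rw [Xok_dist] at k1 k2
      constructor
      · have : |(q i : ℝ) - q j| = ((|q i - q j| : ℚ) : ℝ) := by push_cast; rfl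
        rw [this] at k1
        exact_mod_cast k1
      · exact_mod_cast k2
  refine ⟨⟨ext l, hok⟩, fun i => ?_⟩
  change ((δ (ext l) (a i).1 : ℚ) : ℝ) = (q i : ℝ)
  have : (((a i).1, q i) : C × ℚ) ∈ l := by
    rw [hl, List.mem_ofFn]
    exact ⟨i, rfl⟩
  have := δ_realize hok this
  rw [this]

/-! ### The completion U and approximate realization -/

local notation "U" => UniformSpace.Completion Xok

noncomputable def xbase : Xok := ⟨C.base, ok.base⟩

instance : Nonempty Xok := ⟨xbase⟩

lemma U_dist_coe (x y : Xok) : dist ((x : U)) ((y : U)) = dist x y :=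
  UniformSpace.Completion.dist_eq x y

lemma U_dense (u : U) {η : ℝ} (hη : 0 < η) : ∃ x : Xok, dist ((x : U)) u < η := by
  have hd : Dense (Set.range ((↑) : Xok → U)) := UniformSpace.Completion.denseRange_coe
  rcases Metric.dense_iff.1 hd u η hη with ⟨v, hv1, x, rfl⟩
  exact ⟨x, Metric.mem_ball.1 hv1⟩

theorem U_approx {n : ℕ} (u : Fin n → U) (f : Fin n → ℝ)
    (hpos : ∀ i, 0 < f i) (hle : ∀ i, f i ≤ 1)
    (hk1 : ∀ i j, |f i - f j| ≤ dist (u i) (u j))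
    (hk2 : ∀ i j, dist (u i) (u j) ≤ f i + f j)
    {ε : ℝ} (hε : 0 < ε) :
    ∃ z : Xok, ∀ i, |dist ((z : U)) (u i) - f i| ≤ ε := by
  rcases Nat.eq_zero_or_pos n with rfl | hn
  · exact ⟨xbase, fun i => i.elim0⟩
  haveI : NeZero n := ⟨by omega⟩
  haveI : Nonempty (Fin n) := ⟨⟨0, hn⟩⟩
  set η : ℝ := ε / 5 with hηdef
  have hη : 0 < η := by positivity
  -- approximate each u i by a point of X
  have hx : ∀ i, ∃ x : Xok, dist ((x : U)) (u i) < η := fun i => U_dense (u i) hη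
  choose x hxd using hx
  -- transferred approximate Katetov inequalities
  have hA : ∀ i j, |f i - f j| ≤ dist (x i) (x j) + 2 * η := by
    intro i j
    have t1 : dist (u i) (u j) ≤ dist (u i) ((x i : U)) + dist ((x i : U)) ((x j : U))
        + dist ((x j : U)) (u j) := dist_triangle4 _ _ _ _
    have := hk1 i j
    have e1 := hxd i
    have e2 := hxd j
    rw [U_dist_coe] at t1
    rw [dist_comm] at e1
    linarith
  have hB : ∀ i j, dist (x i) (x j) ≤ f i + f j + 2 * η := by
    intro i j
    have t1 : dist ((x i : U)) ((x j : U)) ≤ dist ((x i : U)) (u i) + dist (u i) (u j)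
        + dist (u j) ((x j : U)) := dist_triangle4 _ _ _ _
    have := hk2 i j
    have e1 := hxd i
    have e2 := hxd j
    rw [U_dist_coe] at t1
    rw [dist_comm] at e2
    linarith
  -- rational upper approximations
  have hr : ∀ i, ∃ r : ℚ, f i + 2 * η < (r : ℝ) ∧ (r : ℝ) < f i + 3 * η := by
    intro i
    rcases exists_rat_btwn (show f i + 2 * η < f i + 3 * η by linarith) with ⟨r, h1, h2⟩
    exact ⟨r, h1, h2⟩
  choose r hr1 hr2 using hr
  -- the rational Katetov function
  set q : Fin n → ℚ :=
    fun i => min 1 (Finset.univ.inf' Finset.univ_nonempty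
      (fun k => r k + δ (x i).1 (x k).1)) with hqdef
  have hcast : ∀ i, (q i : ℝ) = min (1 : ℝ)
      (Finset.univ.inf' Finset.univ_nonempty (fun k => (r k : ℝ) + dist (x i) (x k))) := by
    intro i
    show ((min 1 (Finset.univ.inf' Finset.univ_nonempty
        (fun k => r k + δ (x i).1 (x k).1)) : ℚ) : ℝ) = _
    rw [Rat.cast_min]
    congr 1
    · norm_num
    · rw [Finset.apply_inf'_eq_inf'_comp Finset.univ_nonempty (fun a : ℚ => (a : ℝ))
        (fun a b => by push_cast [Rat.cast_min]; rfl)]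
      congr 1
      funext k
      simp only [Function.comp]
      push_cast
      rw [Xok_dist]
  have hq_le_one : ∀ i, (q i : ℝ) ≤ 1 := by
    intro i; rw [hcast]; exact min_le_left _ _
  have hq_ge : ∀ i, f i ≤ (q i : ℝ) := by
    intro i
    rw [hcast]
    refine le_min (hle i) (Finset.le_inf' _ _ ?_)
    intro k _
    have h1 := hA i k
    have h2 := hr1 k
    have h3 : f i - f k ≤ |f i - f k| := le_abs_self _
    linarith
  have hq_le : ∀ i, (q i : ℝ) ≤ f i + 3 * η := by
    intro i
    rw [hcast]
    refine le_trans (min_le_right _ _) (le_trans (Finset.inf'_le _ (Finset.mem_univ i)) ?_)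
    rw [dist_self]
    have := hr2 i
    linarith
  have hq_pos : ∀ i, 0 < (q i : ℝ) := fun i => lt_of_lt_of_le (hpos i) (hq_ge i)
  -- Lipschitz property
  have hkq1 : ∀ i j, |(q i : ℝ) - (q j : ℝ)| ≤ dist (x i) (x j) := by
    have key : ∀ i j, (q i : ℝ) ≤ (q j : ℝ) + dist (x i) (x j) := by
      intro i j
      rw [hcast, hcast]
      have hd : 0 ≤ dist (x i) (x j) := dist_nonneg
      rcases min_cases (1 : ℝ) (Finset.univ.inf' Finset.univ_nonempty
          (fun k => (r k : ℝ) + dist (x j) (x k))) with ⟨hm, hm'⟩ | ⟨hm, hm'⟩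
      · rw [hm]
        exact le_trans (min_le_left _ _) (by linarith)
      · rw [hm]
        rcases Finset.exists_mem_eq_inf' Finset.univ_nonempty
            (fun k => (r k : ℝ) + dist (x j) (x k)) with ⟨k1, _, hkk⟩
        have h1 : Finset.univ.inf' Finset.univ_nonempty
            (fun k => (r k : ℝ) + dist (x i) (x k))
            ≤ (r k1 : ℝ) + dist (x i) (x k1) := Finset.inf'_le _ (Finset.mem_univ k1)
        have h2 : dist (x i) (x k1) ≤ dist (x i) (x j) + dist (x j) (x k1) :=
          dist_triangle _ _ _
        rw [hkk]
        exact le_trans (min_le_right _ _) (by linarith)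
    intro i j
    rw [abs_sub_le_iff]
    constructor
    · have := key i j; linarith
    · have := key j i; rw [dist_comm] at this; linarith
  -- second Katetov property
  have hkq2 : ∀ i j, dist (x i) (x j) ≤ (q i : ℝ) + (q j : ℝ) := by
    intro i j
    have hd1 : dist (x i) (x j) ≤ 1 := Xok_dist_le_one _ _
    rcases min_cases (1 : ℝ) (Finset.univ.inf' Finset.univ_nonempty
        (fun k => (r k : ℝ) + dist (x i) (x k))) with ⟨hmi, hmi'⟩ | ⟨hmi, hmi'⟩
    · have := hq_pos j
      rw [hcast i, hmi]
      linarith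
    · rcases min_cases (1 : ℝ) (Finset.univ.inf' Finset.univ_nonempty
          (fun k => (r k : ℝ) + dist (x j) (x k))) with ⟨hmj, hmj'⟩ | ⟨hmj, hmj'⟩
      · have := hq_pos i
        rw [hcast j, hmj]
        linarith
      · rw [hcast i, hcast j, hmi, hmj]
        rcases Finset.exists_mem_eq_inf' Finset.univ_nonempty
            (fun k => (r k : ℝ) + dist (x i) (x k)) with ⟨k0, _, hk0⟩
        rcases Finset.exists_mem_eq_inf' Finset.univ_nonempty
            (fun k => (r k : ℝ) + dist (x j) (x k)) with ⟨k1, _, hk1'⟩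
        rw [hk0, hk1']
        have t1 : dist (x i) (x j) ≤ dist (x i) (x k0) + dist (x k0) (x k1)
            + dist (x k1) (x j) := dist_triangle4 _ _ _ _
        have t2 : dist (x k0) (x k1) ≤ f k0 + f k1 + 2 * η := hB k0 k1
        have t3 := hr1 k0
        have t4 := hr1 k1
        have t5 : dist (x k1) (x j) = dist (x j) (x k1) := dist_comm _ _
        linarith
  -- realize exactly in X
  obtain ⟨z, hz⟩ := Xok_realize n x q
    (fun i => by exact_mod_cast hq_pos i)
    (fun i => by exact_mod_cast hq_le_one i)
    hkq1 hkq2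
  refine ⟨z, fun i => ?_⟩
  have e1 : |dist ((z : U)) (u i) - dist ((z : U)) ((x i : U))| ≤ dist ((x i : U)) (u i) := by
    rw [dist_comm ((z : U)) (u i), dist_comm ((z : U)) ((x i : U)),
      dist_comm ((x i : U)) (u i)]
    exact abs_dist_sub_le _ _ _
  rw [U_dist_coe, hz i] at e1
  have e2 := hxd i
  have e3 := hq_ge i
  have e4 := hq_le i
  rw [abs_le] at e1 ⊢
  constructor
  · have := e1.1; nlinarith [hη]
  · have := e1.2; nlinarith [hη]

/-! ### Exact realization in U -/

theorem U_realize {n : ℕ} (u : Fin n → U) (f : Fin n → ℝ)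
    (hnn : ∀ i, 0 ≤ f i) (hle : ∀ i, f i ≤ 1)
    (hk1 : ∀ i j, |f i - f j| ≤ dist (u i) (u j))
    (hk2 : ∀ i j, dist (u i) (u j) ≤ f i + f j) :
    ∃ z : U, ∀ i, dist z (u i) = f i := by
  rcases Nat.eq_zero_or_pos n with rfl | hn
  · exact ⟨(xbase : U), fun i => i.elim0⟩
  haveI : Nonempty (Fin n) := ⟨⟨0, hn⟩⟩
  -- case where some prescribed distance is zero
  by_cases hzero : ∃ i0, f i0 = 0
  · rcases hzero with ⟨i0, hi0⟩
    refine ⟨u i0, fun i => ?_⟩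
    have h1 := hk2 i0 i
    have h2 := hk1 i i0
    rw [hi0] at h1 h2
    rw [abs_le] at h2
    have := h2.2
    have hd : 0 ≤ dist (u i0) (u i) := dist_nonneg
    rw [dist_comm (u i) (u i0)] at h2
    refine le_antisymm (by linarith) ?_
    have := h2.2
    linarith
  push_neg at hzero
  have hpos : ∀ i, 0 < f i := fun i => lt_of_le_of_ne (hnn i) (Ne.symm (hzero i))
  -- invariant
  set P : ℕ → Xok → Prop :=
    fun k w => ∀ i, |dist ((w : U)) (u i) - f i| ≤ (1/2 : ℝ) ^ (k+1) with hP
  -- initial point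
  obtain ⟨z0, hz0⟩ := U_approx u f hpos hle hk1 hk2 (by positivity : (0:ℝ) < (1/2:ℝ)^1)
  -- step
  have step : ∀ k, ∀ w : Xok, P k w →
      ∃ w' : Xok, P (k+1) w' ∧ dist w' w ≤ (1/2 : ℝ) ^ k := by
    intro k w hw
    set d : Fin n → ℝ := fun i => dist ((w : U)) (u i) with hd
    set t : ℝ := Finset.univ.sup' Finset.univ_nonempty (fun i => |d i - f i|) with ht
    set ε' : ℝ := Finset.univ.inf' Finset.univ_nonempty
      (fun i => min (f i) ((1/2 : ℝ) ^ (k+2))) with hε'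
    set t' : ℝ := max t ε' with ht'
    have htub : t ≤ (1/2 : ℝ) ^ (k+1) := by
      rw [ht]
      exact Finset.sup'_le _ _ fun i _ => hw i
    have hε'pos : 0 < ε' := by
      rw [hε']
      refine (Finset.lt_inf'_iff Finset.univ_nonempty).2 ?_
      intro i _
      exact lt_min (hpos i) (by positivity)
    have hε'le : ∀ i, ε' ≤ f i := by
      intro i
      rw [hε']
      exact le_trans (Finset.inf'_le _ (Finset.mem_univ i)) (min_le_left _ _)
    have hε'le2 : ε' ≤ (1/2 : ℝ) ^ (k+2) := by
      rw [hε']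
      exact le_trans (Finset.inf'_le _ (Finset.mem_univ ⟨0, hn⟩)) (min_le_right _ _)
    have ht'pos : 0 < t' := lt_of_lt_of_le hε'pos (le_max_right _ _)
    have ht'ub : t' ≤ (1/2 : ℝ) ^ (k+1) := by
      rw [ht']
      refine max_le htub (le_trans hε'le2 ?_)
      exact pow_le_pow_of_le_one (by norm_num) (by norm_num) (by omega)
    have hdt : ∀ i, |d i - f i| ≤ t := fun i =>
      Finset.le_sup' (fun i => |d i - f i|) (Finset.mem_univ i)
    have htle : ∀ i, t ≤ f i + d i := by
      intro i
      rw [ht]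
      refine Finset.sup'_le _ _ ?_
      intro j _
      simp only [hd]
      rw [abs_sub_le_iff]
      have T1 : dist ((w : U)) (u j) ≤ dist ((w : U)) (u i) + dist (u i) (u j) :=
        dist_triangle _ _ _
      have T2 : dist (u i) (u j) ≤ dist (u i) ((w : U)) + dist ((w : U)) (u j) :=
        dist_triangle _ _ _
      have c2 : dist (u i) ((w : U)) = dist ((w : U)) (u i) := dist_comm _ _
      have c3 : dist (u j) (u i) = dist (u i) (u j) := dist_comm _ _
      have e2 : dist (u i) (u j) ≤ f i + f j := hk2 i j
      have e3 := hk1 j i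
      rw [abs_sub_le_iff] at e3
      have e31 := e3.1
      constructor
      · linarith
      · linarith
    -- build extended data
    set uext : Fin (n+1) → U := Fin.snoc u ((w : U)) with huext
    set F : Fin (n+1) → ℝ := Fin.snoc f t' with hF
    have hFc : ∀ i : Fin n, F i.castSucc = f i := fun i => Fin.snoc_castSucc _ _ _
    have hFl : F (Fin.last n) = t' := Fin.snoc_last _ _
    have huc : ∀ i : Fin n, uext i.castSucc = u i := fun i => Fin.snoc_castSucc _ _ _
    have hul : uext (Fin.last n) = (w : U) := Fin.snoc_last _ _
    have hdnn : ∀ i, 0 ≤ d i := by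
      intro i
      rw [hd]
      exact dist_nonneg
    have hmix1 : ∀ i : Fin n, |f i - t'| ≤ d i := by
      intro i
      rw [abs_sub_le_iff]
      constructor
      · have h2 := (abs_sub_le_iff.1 (hdt i)).2
        have h3 : t ≤ t' := le_max_left _ _
        linarith
      · rw [ht']
        rcases max_cases t ε' with ⟨hm, _⟩ | ⟨hm, _⟩
        · rw [hm]; have := htle i; linarith
        · rw [hm]
          have := hε'le i
          have := hdnn i
          linarith
    have hmix2 : ∀ i : Fin n, d i ≤ f i + t' := by
      intro i
      have h2 := (abs_sub_le_iff.1 (hdt i)).1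
      have : t ≤ t' := le_max_left _ _
      linarith
    -- verify Katetov data for extended family
    have hk1' : ∀ i j : Fin (n+1), |F i - F j| ≤ dist (uext i) (uext j) := by
      intro i j
      refine Fin.lastCases ?_ ?_ i
      · refine Fin.lastCases ?_ ?_ j
        · simp [hFl, hul]
        · intro j'
          rw [hFl, hul, hFc, huc]
          rw [abs_sub_comm]
          have h := hmix1 j'
          simp only [hd] at h
          exact h
      · intro i'
        refine Fin.lastCases ?_ ?_ j
        · rw [hFl, hul, hFc, huc]
          have h := hmix1 i'
          simp only [hd] at h
          rw [dist_comm]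
          exact h
        · intro j'
          rw [hFc, hFc, huc, huc]
          exact hk1 i' j'
    have hk2' : ∀ i j : Fin (n+1), dist (uext i) (uext j) ≤ F i + F j := by
      intro i j
      refine Fin.lastCases ?_ ?_ i
      · refine Fin.lastCases ?_ ?_ j
        · simp [hFl, hul]; positivity
        · intro j'
          rw [hFl, hul, hFc, huc]
          have h := hmix2 j'
          simp only [hd] at h
          linarith
      · intro i'
        refine Fin.lastCases ?_ ?_ j
        · rw [hFl, hul, hFc, huc]
          have h := hmix2 i'
          simp only [hd] at h
          rw [dist_comm]
          linarith
        · intro j'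
          rw [hFc, hFc, huc, huc]
          exact hk2 i' j'
    have hpos' : ∀ i : Fin (n+1), 0 < F i := by
      intro i
      refine Fin.lastCases ?_ ?_ i
      · rw [hFl]; exact ht'pos
      · intro i'; rw [hFc]; exact hpos i'
    have hle' : ∀ i : Fin (n+1), F i ≤ 1 := by
      intro i
      refine Fin.lastCases ?_ ?_ i
      · rw [hFl]
        refine le_trans ht'ub ?_
        apply pow_le_one₀ <;> norm_num
      · intro i'; rw [hFc]; exact hle i'
    obtain ⟨z', hz'⟩ := U_approx uext F hpos' hle' hk1' hk2'
      (by positivity : (0:ℝ) < (1/2:ℝ)^(k+2))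
    refine ⟨z', ?_, ?_⟩
    · intro i
      have := hz' i.castSucc
      rw [hFc, huc] at this
      exact this
    · have := hz' (Fin.last n)
      rw [hFl, hul] at this
      rw [abs_le] at this
      have h1 := this.1
      have h2 := this.2
      have : dist z' w = dist ((z' : U)) ((w : U)) := (U_dist_coe _ _).symm
      rw [this]
      have hcalc : (1/2:ℝ)^(k+1) + (1/2:ℝ)^(k+2) ≤ (1/2:ℝ)^k := by
        have e : (1/2:ℝ)^(k+1) = (1/2:ℝ)^k * (1/2) := pow_succ _ _
        have e2 : (1/2:ℝ)^(k+2) = (1/2:ℝ)^k * (1/2) * (1/2) := by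
          rw [pow_succ, pow_succ]
        have hp : (0:ℝ) ≤ (1/2:ℝ)^k := by positivity
        nlinarith
      linarith [ht'ub]
  -- build the sequence
  choose Fstep hF1 hF2 using step
  have hz0' : P 0 z0 := by
    intro i
    simpa using hz0 i
  let zs : ∀ _ : ℕ, {w : Xok // P _ w} := fun k =>
    Nat.rec (motive := fun k => {w : Xok // P k w}) ⟨z0, hz0'⟩
      (fun k ih => ⟨Fstep k ih.1 ih.2, hF1 k ih.1 ih.2⟩) k
  have hstep : ∀ k, dist ((zs (k+1)).1) ((zs k).1) ≤ (1/2 : ℝ) ^ k :=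
    fun k => hF2 k (zs k).1 (zs k).2
  set useq : ℕ → U := fun k => (((zs k).1 : Xok) : U) with huseq
  have hcauchy : CauchySeq useq := by
    refine cauchySeq_of_le_geometric (1/2 : ℝ) 1 (by norm_num) ?_
    intro k
    rw [huseq]
    simp only
    rw [U_dist_coe, dist_comm]
    have := hstep k
    calc dist ((zs (k+1)).1) ((zs k).1) ≤ (1/2:ℝ)^k := this
      _ = 1 * (1/2:ℝ)^k := (one_mul _).symm
  obtain ⟨z, hzlim⟩ := cauchySeq_tendsto_of_complete hcauchy
  refine ⟨z, fun i => ?_⟩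
  have h1 : Filter.Tendsto (fun k => dist (useq k) (u i)) Filter.atTop
      (nhds (dist z (u i))) := hzlim.dist tendsto_const_nhds
  have h2 : Filter.Tendsto (fun k => dist (useq k) (u i) - f i) Filter.atTop (nhds 0) := by
    refine squeeze_zero_norm (a := fun k => (1/2 : ℝ) ^ k) ?_ ?_
    · intro k
      have := (zs k).2 i
      rw [Real.norm_eq_abs]
      refine le_trans this ?_
      exact pow_le_pow_of_le_one (by norm_num) (by norm_num) (by omega)
    · exact tendsto_pow_atTop_nhds_zero_of_lt_one (by norm_num) (by norm_num)
  have h3 : Filter.Tendsto (fun k => dist (useq k) (u i)) Filter.atTop (nhds (f i)) := by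
    have := h2.add_const (f i)
    simpa using this
  exact tendsto_nhds_unique h1 h3

/-! ### The universal embedding property -/

theorem embed (M : Type u) [MetricSpace M] [TopologicalSpace.SeparableSpace M]
    [Nonempty M] {c : ℝ} (hc : 0 < c) (hbdd : ∀ a b : M, dist a b ≤ c) :
    ∃ h : M → U, ∀ a b : M, dist (h a) (h b) = dist a b / c := by
  obtain ⟨s, hs⟩ := TopologicalSpace.exists_dense_seq M
  -- one-step extension
  have key : ∀ n : ℕ, ∀ g : Fin n → U,
      (∀ i j : Fin n, dist (g i) (g j) = dist (s i) (s j) / c) →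
      ∃ z : U, ∀ i : Fin n, dist z (g i) = dist (s n) (s i) / c := by
    intro n g hg
    refine U_realize g (fun i => dist (s n) (s i) / c) ?_ ?_ ?_ ?_
    · intro i; positivity
    · intro i; rw [div_le_one hc]; exact hbdd _ _
    · intro i j
      have e : |dist (s n) (s i) - dist (s n) (s j)| ≤ dist (s i) (s j) := by
        rw [dist_comm (s n) (s i), dist_comm (s n) (s j)]
        exact abs_dist_sub_le _ _ _
      rw [hg i j, div_sub_div_same, abs_div, abs_of_pos hc]
      exact (div_le_div_iff_of_pos_right hc).2 e
    · intro i j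
      rw [hg i j, ← add_div]
      exact (div_le_div_iff_of_pos_right hc).2 (dist_triangle_left _ _ _)
  have keyex : ∀ n : ℕ,
      ∀ g : {g : Fin n → U // ∀ i j : Fin n, dist (g i) (g j) = dist (s i) (s j) / c},
      ∃ z : U, ∀ i : Fin n, dist z (g.1 i) = dist (s n) (s i) / c :=
    fun n g => key n g.1 g.2
  choose zfun hzfun using keyex
  -- the cumulative maps
  let Φ : ∀ n : ℕ, {g : Fin n → U // ∀ i j : Fin n, dist (g i) (g j) = dist (s i) (s j) / c} :=
    fun n => Nat.rec
      (motive := fun n => {g : Fin n → U // ∀ i j : Fin n, dist (g i) (g j) = dist (s i) (s j) / c})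
      ⟨fun i => i.elim0, fun i => i.elim0⟩
      (fun n ih => ⟨Fin.snoc ih.1 (zfun n ih), by
        intro i j
        refine Fin.lastCases ?_ ?_ i
        · refine Fin.lastCases ?_ ?_ j
          · rw [Fin.snoc_last]
            simp
          · intro j'
            rw [Fin.snoc_last, Fin.snoc_castSucc]
            have := hzfun n ih j'
            simpa using this
        · intro i'
          refine Fin.lastCases ?_ ?_ j
          · rw [Fin.snoc_last, Fin.snoc_castSucc]
            have := hzfun n ih i'
            rw [dist_comm]
            simp only [Fin.coe_castSucc, Fin.val_last]
            rw [this, dist_comm]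
          · intro j'
            rw [Fin.snoc_castSucc, Fin.snoc_castSucc]
            simpa using ih.2 i' j'⟩)
      n
  have hcoh : ∀ n (i : Fin n), (Φ (n+1)).1 i.castSucc = (Φ n).1 i := by
    intro n i
    show (Fin.snoc (Φ n).1 (zfun n (Φ n)) : Fin (n+1) → U) i.castSucc = (Φ n).1 i
    exact Fin.snoc_castSucc _ _ _
  set φ : ℕ → U := fun k => (Φ (k+1)).1 (Fin.last k) with hφ
  have hΦφ : ∀ n (i : Fin n), (Φ n).1 i = φ i := by
    intro n
    induction n with
    | zero => exact fun i => i.elim0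
    | succ n ih =>
      intro i
      refine Fin.lastCases ?_ ?_ i
      · rfl
      · intro i'
        rw [hcoh n i', ih i', Fin.coe_castSucc]
  have hφdist : ∀ a b : ℕ, dist (φ a) (φ b) = dist (s a) (s b) / c := by
    intro a b
    have ha : a < max a b + 1 := by omega
    have hb : b < max a b + 1 := by omega
    have := (Φ (max a b + 1)).2 ⟨a, ha⟩ ⟨b, hb⟩
    rw [hΦφ _ ⟨a, ha⟩, hΦφ _ ⟨b, hb⟩] at this
    simpa using this
  -- approximating indices for arbitrary points
  have happrox : ∀ (m : M) (k : ℕ), ∃ idx : ℕ, dist m (s idx) < 1 / (k + 1) := by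
    intro m k
    have := Metric.denseRange_iff.1 hs m (1 / (k+1)) (by positivity)
    exact this
  choose ν hν using happrox
  have hψc : ∀ m : M, CauchySeq (fun k => φ (ν m k)) := by
    intro m
    refine cauchySeq_of_le_tendsto_0 (fun N => (2 / (N + 1)) / c) ?_ ?_
    · intro k l N hk hl
      rw [hφdist]
      have e1 : dist (s (ν m k)) (s (ν m l)) ≤ dist m (s (ν m k)) + dist m (s (ν m l)) :=
        dist_triangle_left _ _ _
      have e2 := hν m k
      have e3 := hν m l
      have e4 : (1:ℝ) / (k+1) ≤ 1 / (N+1) := by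
        apply one_div_le_one_div_of_le
        · positivity
        · have : (N:ℝ) ≤ k := Nat.cast_le.2 hk
          linarith
      have e5 : (1:ℝ) / (l+1) ≤ 1 / (N+1) := by
        apply one_div_le_one_div_of_le
        · positivity
        · have : (N:ℝ) ≤ l := Nat.cast_le.2 hl
          linarith
      rw [div_le_div_iff_of_pos_right hc]
      have : (2:ℝ) / (N+1) = 1/(N+1) + 1/(N+1) := by ring
      rw [this]
      linarith
    · have h0 : Filter.Tendsto (fun N : ℕ => (1:ℝ) / (N + 1)) Filter.atTop (nhds 0) :=
        tendsto_one_div_add_atTop_nhds_zero_nat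
      have := (h0.const_mul (2 / c))
      rw [mul_zero] at this
      convert this using 2 with N
      field_simp
  have hslim : ∀ m : M, Filter.Tendsto (fun k => s (ν m k)) Filter.atTop (nhds m) := by
    intro m
    rw [tendsto_iff_dist_tendsto_zero]
    refine squeeze_zero (fun k => dist_nonneg) (fun k => ?_)
      tendsto_one_div_add_atTop_nhds_zero_nat
    rw [dist_comm]
    exact le_of_lt (hν m k)
  have hlim : ∀ m : M, ∃ z : U, Filter.Tendsto (fun k => φ (ν m k)) Filter.atTop (nhds z) :=
    fun m => cauchySeq_tendsto_of_complete (hψc m)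
  choose h hh using hlim
  refine ⟨h, fun a b => ?_⟩
  have t1 : Filter.Tendsto (fun k => dist (φ (ν a k)) (φ (ν b k))) Filter.atTop
      (nhds (dist (h a) (h b))) := (hh a).dist (hh b)
  have t2 : Filter.Tendsto (fun k => dist (φ (ν a k)) (φ (ν b k))) Filter.atTop
      (nhds (dist a b / c)) := by
    have e : (fun k => dist (φ (ν a k)) (φ (ν b k)))
        = fun k => dist (s (ν a k)) (s (ν b k)) / c := by
      funext k
      exact hφdist _ _
    rw [e]
    have := ((hslim a).dist (hslim b)).div_const c
    exact this
  exact tendsto_nhds_unique t1 t2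

/-! ### Separability and diameter of U -/

instance : TopologicalSpace.SeparableSpace Xok :=
  ⟨⟨Set.univ, Set.countable_univ, dense_univ⟩⟩

instance : TopologicalSpace.SeparableSpace U :=
  (UniformSpace.Completion.denseRange_coe (α := Xok)).separableSpace
    (UniformSpace.Completion.continuous_coe _)

lemma U_dist_le_one (a b : U) : dist a b ≤ 1 := by
  refine UniformSpace.Completion.induction_on₂ (p := fun a b => dist a b ≤ 1) a b ?_ ?_
  · have : IsClosed {x : U × U | dist x.1 x.2 ≤ 1} :=
      isClosed_le (by fun_prop) continuous_const
    exact this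
  · intro x y
    rw [U_dist_coe]
    exact Xok_dist_le_one x y

/-! ### The final space V -/

structure V : Type where
  n : ℕ
  u : U

namespace V

noncomputable def vdist (p q : V) : ℝ :=
  if p.n = q.n then ((p.n : ℝ) + 1) * dist p.u q.u
  else ((p.n : ℝ) + 1) + ((q.n : ℝ) + 1)

lemma vdist_self (p : V) : vdist p p = 0 := by simp [vdist]

lemma vdist_comm (p q : V) : vdist p q = vdist q p := by
  unfold vdist
  rcases eq_or_ne p.n q.n with h | h
  · rw [if_pos h, if_pos h.symm, h, dist_comm]
  · rw [if_neg h, if_neg (Ne.symm h)]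
    ring

lemma vdist_triangle (p q r : V) : vdist p r ≤ vdist p q + vdist q r := by
  unfold vdist
  have d1 : (0:ℝ) ≤ dist p.u q.u := dist_nonneg
  have d2 : (0:ℝ) ≤ dist q.u r.u := dist_nonneg
  have d3 : (0:ℝ) ≤ dist p.u r.u := dist_nonneg
  have u1 : dist p.u r.u ≤ 1 := U_dist_le_one _ _
  have c1 : (0:ℝ) ≤ (p.n : ℝ) := Nat.cast_nonneg _
  have c2 : (0:ℝ) ≤ (q.n : ℝ) := Nat.cast_nonneg _
  have c3 : (0:ℝ) ≤ (r.n : ℝ) := Nat.cast_nonneg _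
  by_cases hpq : p.n = q.n <;> by_cases hqr : q.n = r.n
  · have hpr : p.n = r.n := hpq.trans hqr
    rw [if_pos hpq, if_pos hqr, if_pos hpr, hpq]
    have ht : dist p.u r.u ≤ dist p.u q.u + dist q.u r.u := dist_triangle _ _ _
    nlinarith
  · have hpr : p.n ≠ r.n := fun h => hqr (hpq.symm.trans h)
    rw [if_neg hpr, if_pos hpq, if_neg hqr, hpq]
    nlinarith
  · have hpr : p.n ≠ r.n := fun h => hpq (h.trans hqr.symm)
    rw [if_neg hpr, if_neg hpq, if_pos hqr, hqr]
    nlinarith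
  · by_cases hpr : p.n = r.n
    · rw [if_pos hpr, if_neg hpq, if_neg hqr, hpr]
      nlinarith
    · rw [if_neg hpr, if_neg hpq, if_neg hqr]
      linarith

lemma vdist_eq_zero {p q : V} (h : vdist p q = 0) : p = q := by
  unfold vdist at h
  by_cases hpq : p.n = q.n
  · rw [if_pos hpq] at h
    have hc : (0:ℝ) < (p.n : ℝ) + 1 := by positivity
    have hd : dist p.u q.u = 0 := by
      rcases mul_eq_zero.1 h with h' | h'
      · linarith
      · exact h'
    have hu : p.u = q.u := dist_eq_zero.1 hd
    cases p; cases q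
    simp only at hpq hu
    rw [hpq, hu]
  · rw [if_neg hpq] at h
    have c1 : (0:ℝ) ≤ (p.n : ℝ) := Nat.cast_nonneg _
    have c2 : (0:ℝ) ≤ (q.n : ℝ) := Nat.cast_nonneg _
    exfalso
    linarith

noncomputable instance : MetricSpace V where
  dist := vdist
  dist_self := vdist_self
  dist_comm := vdist_comm
  dist_triangle := vdist_triangle
  eq_of_dist_eq_zero := fun h => vdist_eq_zero h

lemma dist_def (p q : V) : dist p q = vdist p q := rfl

lemma dist_same (n : ℕ) (x y : U) : dist (V.mk n x) (V.mk n y) = ((n:ℝ)+1) * dist x y := by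
  rw [dist_def, vdist, if_pos rfl]

lemma dist_diff {p q : V} (h : p.n ≠ q.n) : dist p q = ((p.n:ℝ)+1) + ((q.n:ℝ)+1) := by
  rw [dist_def, vdist, if_neg h]

lemma dist_same' {p q : V} (h : p.n = q.n) :
    dist p q = ((p.n : ℝ) + 1) * dist p.u q.u := by
  rw [dist_def, vdist, if_pos h]

instance : TopologicalSpace.SeparableSpace V := by
  obtain ⟨s, hsc, hsd⟩ := TopologicalSpace.exists_countable_dense U
  refine ⟨⟨Set.image2 V.mk Set.univ s, Set.Countable.image2 Set.countable_univ hsc _, ?_⟩⟩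
  rw [Metric.dense_iff]
  rintro ⟨n, u⟩ ε hε
  have hn : (0:ℝ) < (n:ℝ)+1 := by positivity
  obtain ⟨y, hyb, hys⟩ := Metric.dense_iff.1 hsd u (ε/((n:ℝ)+1)) (by positivity)
  refine ⟨V.mk n y, ?_, Set.mem_image2_of_mem (Set.mem_univ n) hys⟩
  rw [Metric.mem_ball]
  rw [Metric.mem_ball] at hyb
  calc dist (V.mk n y) (V.mk n u) = ((n:ℝ)+1) * dist y u := dist_same n y u
    _ < ((n:ℝ)+1) * (ε/((n:ℝ)+1)) := mul_lt_mul_of_pos_left hyb hn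
    _ = ε := by field_simp

end V

/-! ### Universality of V -/

theorem V_univ (M : Type u) [MetricSpace M] [TopologicalSpace.SeparableSpace M]
    (hb : ∃ C : ℝ, ∀ x y : M, dist x y ≤ C) : ∃ j : M → V, Isometry j := by
  rcases isEmpty_or_nonempty M with hM | hM
  · exact ⟨fun m => isEmptyElim m, fun x _ => isEmptyElim x⟩
  obtain ⟨C, hC⟩ := hb
  obtain ⟨n, hn⟩ := exists_nat_ge C
  have hc : (0:ℝ) < (n:ℝ)+1 := by positivity
  have hbdd : ∀ a b : M, dist a b ≤ (n:ℝ)+1 := fun a b => (hC a b).trans (by linarith)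
  obtain ⟨h, hh⟩ := embed M hc hbdd
  refine ⟨fun m => V.mk n (h m), Isometry.of_dist_eq fun a b => ?_⟩
  rw [V.dist_same, hh]
  field_simp

/-! ### No isometric copy of ℝ in V -/

theorem V_noR : ¬ ∃ j : ℝ → V, Isometry j := by
  rintro ⟨j, hj⟩
  have hd : ∀ a b : ℝ, dist (j a) (j b) = |a - b| := fun a b => by
    rw [hj.dist_eq, Real.dist_eq]
  have hstep : ∀ k : ℕ, (j ((k:ℝ)+1)).n = (j (k:ℝ)).n := by
    intro k
    by_contra hne
    have h1 := V.dist_diff hne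
    have h2 : dist (j ((k:ℝ)+1)) (j (k:ℝ)) = 1 := by
      rw [hd]
      norm_num
    have c1 : (0:ℝ) ≤ ((j ((k:ℝ)+1)).n : ℝ) := Nat.cast_nonneg _
    have c2 : (0:ℝ) ≤ ((j (k:ℝ)).n : ℝ) := Nat.cast_nonneg _
    rw [h2] at h1
    linarith
  have hconst : ∀ k : ℕ, (j (k:ℝ)).n = (j 0).n := by
    intro k
    induction k with
    | zero => norm_num
    | succ k ih =>
      have hh := hstep k
      rw [ih] at hh
      have e : ((k+1 : ℕ) : ℝ) = (k:ℝ)+1 := by push_cast; ring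
      rw [e]
      exact hh
  set N := (j 0).n with hN
  have hsame : (j ((N+2 : ℕ) : ℝ)).n = (j 0).n := hconst (N+2)
  have hkey : dist (j ((N+2 : ℕ) : ℝ)) (j 0) = (N:ℝ)+2 := by
    rw [hd]
    push_cast
    rw [sub_zero, abs_of_nonneg (by positivity)]
  have hbound : dist (j ((N+2 : ℕ) : ℝ)) (j 0) ≤ ((j ((N+2:ℕ):ℝ)).n : ℝ) + 1 := by
    rw [V.dist_same' hsame]
    have h1 : dist (j ((N+2:ℕ):ℝ)).u (j 0).u ≤ 1 := U_dist_le_one _ _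
    have h2 : (0:ℝ) ≤ dist (j ((N+2:ℕ):ℝ)).u (j 0).u := dist_nonneg
    nlinarith [(show (0:ℝ) ≤ ((j ((N+2:ℕ):ℝ)).n : ℝ) from Nat.cast_nonneg _)]
  rw [hkey, hsame, ← hN] at hbound
  linarith

end Stmt6x

/-- There exists a separable metric space `V` such that every bounded
separable metric space embeds isometrically into `V`, but `ℝ` does not embed isometrically
into `V`. -/
theorem stmt6 :
    ∃ (V : Type) (mV : MetricSpace V),
      @TopologicalSpace.SeparableSpace V mV.toUniformSpace.toTopologicalSpace ∧
      (∀ (M : Type u) (mM : MetricSpace M),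
        @TopologicalSpace.SeparableSpace M mM.toUniformSpace.toTopologicalSpace →
        (∃ C : ℝ, ∀ x y : M, @dist M mM.toDist x y ≤ C) →
        ∃ j : M → V, @Isometry M V mM.toPseudoEMetricSpace mV.toPseudoEMetricSpace j) ∧
      ¬ ∃ j : ℝ → V, @Isometry ℝ V _ mV.toPseudoEMetricSpace j := by
  refine ⟨Stmt6x.V, inferInstance, inferInstance, ?_, Stmt6x.V_noR⟩
  intro M mM hsep hb
  haveI := hsep
  exact Stmt6x.V_univ M hb
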